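/- Let q_S, q_R, δ_S, δ_R ∈ (0,1), P_SD, P_SR, P_RD ∈ (0,1), P = P_SD + (1−P_SD)·P_SR. Suppose λ_S and λ_{R,total} = λ_R + ((1−P_SD)·P_SR/P)·λ_S satisfy the first-dominant-system conditions: λ_{R,total} < min(δ_R,q_R)·(1−min(δ_S,q_S))·P_RD, and Pr(active R) = λ_{R,total} / ((1−min(δ_S,q_S))·q_R·P_RD) ∈ [0,1]. Then the source service rate μ_S = min(δ_S,q_S)·(1 − λ_{R,total}/((1−min(δ_S,q_S))·P_RD))·P is positive, and λ_S < μ_S is equivalent to the linear inequality (1 + m_S·(1−P_SD)·P_SR/((1−m_S)·P_RD))·λ_S + (m_S·P/((1−m_S)·P_RD))·λ_R < m_S·P, where m_S = min(δ_S,q_S). -/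
import Mathlib


/-- The first-dominant-system derivation of region `R_1`: the source service
rate is positive, and the source stability condition `λ_S < μ_S` is
equivalent to the stated linear inequality. -/
theorem R1_derivation (δ_S δ_R q_S q_R P_SD P_SR P_RD lamS lamR : ℝ)
    (hδS : δ_S ∈ Set.Ioo (0:ℝ) 1) (hδR : δ_R ∈ Set.Ioo (0:ℝ) 1)
    (hqS : q_S ∈ Set.Ioo (0:ℝ) 1) (hqR : q_R ∈ Set.Ioo (0:ℝ) 1)
    (hSD : P_SD ∈ Set.Ioo (0:ℝ) 1) (hSR : P_SR ∈ Set.Ioo (0:ℝ) 1)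
    (hRD : P_RD ∈ Set.Ioo (0:ℝ) 1)
    (P : ℝ) (hP : P = P_SD + (1 - P_SD) * P_SR)
    (hlamS0 : 0 ≤ lamS) (hlamR0 : 0 ≤ lamR)
    (mS : ℝ) (hmS : mS = min δ_S q_S)
    (lamRtot : ℝ) (hlamRtot : lamRtot = lamR + ((1 - P_SD) * P_SR / P) * lamS)
    (hstab : lamRtot < min δ_R q_R * (1 - mS) * P_RD)
    (hactive : lamRtot / ((1 - mS) * q_R * P_RD) ∈ Set.Icc (0:ℝ) 1)
    (μS : ℝ) (hμS : μS = mS * (1 - lamRtot / ((1 - mS) * P_RD)) * P) :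
    0 < μS ∧
    (lamS < μS ↔
      (1 + mS * ((1 - P_SD) * P_SR) / ((1 - mS) * P_RD)) * lamS
        + (mS * P / ((1 - mS) * P_RD)) * lamR < mS * P) := by
  obtain ⟨hδS0, hδS1⟩ := hδS
  obtain ⟨hδR0, hδR1⟩ := hδR
  obtain ⟨hqS0, hqS1⟩ := hqS
  obtain ⟨hqR0, hqR1⟩ := hqR
  obtain ⟨hSD0, hSD1⟩ := hSD
  obtain ⟨hSR0, hSR1⟩ := hSR
  obtain ⟨hRD0, hRD1⟩ := hRD
  have hP0 : 0 < P := by rw [hP]; nlinarith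
  have hmS0 : 0 < mS := by rw [hmS]; exact lt_min hδS0 hqS0
  have hmS1 : mS < 1 := by rw [hmS]; exact min_lt_of_left_lt hδS1
  have hD : 0 < (1 - mS) * P_RD := by nlinarith
  have hmin1 : min δ_R q_R < 1 := min_lt_of_left_lt hδR1
  have hmin0 : 0 < min δ_R q_R := lt_min hδR0 hqR0
  have hlt : lamRtot < (1 - mS) * P_RD := by nlinarith
  have hD' : ((1 - mS) * P_RD) ≠ 0 := ne_of_gt hD
  have hμpos : 0 < μS := by
    rw [hμS]
    have h1 : lamRtot / ((1 - mS) * P_RD) < 1 := (div_lt_one hD).2 hlt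
    have : 0 < 1 - lamRtot / ((1 - mS) * P_RD) := by linarith
    positivity
  refine ⟨hμpos, ?_⟩
  have key : μS - lamS =
      mS * P - ((1 + mS * ((1 - P_SD) * P_SR) / ((1 - mS) * P_RD)) * lamS
        + (mS * P / ((1 - mS) * P_RD)) * lamR) := by
    rw [hμS, hlamRtot]
    field_simp
    ring
  constructor <;> intro h <;> linarith [key]
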